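/- arXiv:0710.2889 — 4 statements merged into one kernel-verified Lean document; each statement's English description precedes it below -/
import Mathlib

section
/- Let ω: ℕ × ℕ → ℝ≥0 satisfy symmetry ω(i,j)=ω(j,i), monotonicity (ω(i,j) ≤ ω(i,k) whenever i<j<k or i>j>k), and the triangle inequality ω(i,j) ≤ ω(i,k)+ω(k,j). Let σ* be a ranking (a bijection V → {1,…,n}) on a finite set V, and define Δ(u,v) = ω(σ*(u), σ*(v)) if σ*(u) < σ*(v) and 0 otherwise. Then Δ satisfies the triangle inequality: Δ(u,v) ≤ Δ(u,w) + Δ(w,v) for all u,v,w ∈ V. -/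
/-- admissible weight functions induce a triangle inequality on Δ. -/
theorem delta_triangle {V : Type*} {n : ℕ}
    (ω : ℕ → ℕ → ℝ) (hnn : ∀ i j, 0 ≤ ω i j)
    (hsym : ∀ i j, ω i j = ω j i)
    (hmon : ∀ i j k, (i < j ∧ j < k) ∨ (k < j ∧ j < i) → ω i j ≤ ω i k)
    (htri : ∀ i j k, ω i j ≤ ω i k + ω k j)
    (σs : V ≃ Fin n)
    (Δ : V → V → ℝ)
    (hΔ : ∀ u v, Δ u v = if ((σs u : ℕ) < (σs v : ℕ)) then ω (σs u) (σs v) else 0) :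
    ∀ u v w : V, Δ u v ≤ Δ u w + Δ w v := by
  intro u v w
  rw [hΔ, hΔ, hΔ]
  set a := (σs u : ℕ) with ha
  set b := (σs v : ℕ) with hb
  set c := (σs w : ℕ) with hc
  by_cases hab : a < b
  · simp only [if_pos hab]
    rcases lt_trichotomy c a with hca | hca | hca
    · have h1 : ω a b ≤ ω c b := by
        rw [hsym a b, hsym c b]
        exact hmon b a c (Or.inr ⟨hca, hab⟩)
      rw [if_neg (by omega), if_pos (show c < b by omega)]
      linarith [hnn c b]
    · rw [hca]
      rw [if_neg (lt_irrefl a), if_pos hab]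
      linarith
    · rcases lt_trichotomy c b with hcb | hcb | hcb
      · rw [if_pos hca, if_pos hcb]; exact htri a b c
      · rw [hcb, if_pos hab, if_neg (lt_irrefl b)]
        linarith
      · have h1 : ω a b ≤ ω a c := hmon a b c (Or.inl ⟨hab, hcb⟩)
        rw [if_pos (hab.trans hcb), if_neg (by omega)]
        linarith
  · rw [if_neg hab]
    have h1 : (0:ℝ) ≤ if a < c then ω a c else 0 := by
      split_ifs with h; exacts [hnn a c, le_refl 0]
    have h2 : (0:ℝ) ≤ if c < b then ω c b else 0 := by
      split_ifs with h; exacts [hnn c b, le_refl 0]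
    linarith
end

section
/- Let h: V × V → {0,1} be a binary preference function on a finite set V with h(u,v) + h(v,u) = 1 for all u ≠ v, and suppose h(u,v) = h(v,w) = h(w,u) = 1 for distinct u,v,w (a 3-cycle). Let Δ: V × V → ℝ≥0 satisfy the triangle inequality Δ(a,c) ≤ Δ(a,b) + Δ(b,c). Define β = (1/3)(Δ(u,v) + Δ(v,w) + Δ(w,u)) and γ = (1/3)(Δ(v,u) + Δ(w,v) + Δ(u,w)). Then β ≤ 2γ. -/
/-- on a 3-cycle of the preference function, β ≤ 2γ for any Δ
satisfying the triangle inequality. -/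
theorem beta_le_two_gamma {V : Type*} (h : V → V → ℝ) (Δ : V → V → ℝ)
    (hbin : ∀ a b : V, h a b = 0 ∨ h a b = 1)
    (hcons : ∀ a b : V, a ≠ b → h a b + h b a = 1)
    (u v w : V) (huv : u ≠ v) (hvw : v ≠ w) (huw : u ≠ w)
    (hcyc : h u v = 1 ∧ h v w = 1 ∧ h w u = 1)
    (hnn : ∀ a b : V, 0 ≤ Δ a b)
    (htri : ∀ a b c : V, Δ a c ≤ Δ a b + Δ b c) :
    (1 / 3) * (Δ u v + Δ v w + Δ w u) ≤ 2 * ((1 / 3) * (Δ v u + Δ w v + Δ u w)) := by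
  have h1 := htri u w v
  have h2 := htri v u w
  have h3 := htri w v u
  linarith
end

section
/- Fix V = {u,v,w} and a preference function h with h(u,v) = h(v,w) = h(w,u) = 1 (a 3-cycle). For any deterministic map A that takes (V,h) and outputs a linear ranking σ of V, there exists a two-class partition τ* of V such that the bipartite misranking loss of σ against τ* is exactly 2/3 while the misranking loss of h against τ* is exactly 1/3. Hence no deterministic reduction from a preference function to a ranking can guarantee ranking loss less than twice the classifier loss. -/
lemma sum_helper {V : Type*} [Fintype V] [DecidableEq V]
    (a b c : V) (hab : a ≠ b) (hbc : b ≠ c) (hac : a ≠ c)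
    (huniv : (Finset.univ : Finset V) = {a, b, c})
    (f : V → V → ℝ) :
    (∑ x : V, ∑ y : V,
        f x y * (if (fun z => if z = c then (0 : Fin 2) else 1) y
            < (fun z => if z = c then (0 : Fin 2) else 1) x then 1 else 0))
      = f a c + f b c := by
  have key : ∀ x y : V,
      ((fun z => if z = c then (0 : Fin 2) else 1) y
        < (fun z => if z = c then (0 : Fin 2) else 1) x) ↔ (y = c ∧ x ≠ c) := by
    intro x y
    by_cases hy : y = c <;> by_cases hx : x = c <;> simp [hy, hx] <;> decide
  have hna : a ∉ ({b, c} : Finset V) := by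
    simp only [Finset.mem_insert, Finset.mem_singleton]
    exact fun hm => hm.elim hab hac
  have hnb : b ∉ ({c} : Finset V) := by
    simp only [Finset.mem_singleton]; exact hbc
  simp only [key]
  rw [huniv]
  simp only [Finset.sum_insert hna, Finset.sum_insert hnb, Finset.sum_singleton]
  simp [hab, hbc, hac, hab.symm, hbc.symm, hac.symm]

/-- lower bound for deterministic reductions.  For V = {u,v,w}
with a cyclic preference function h, whatever ranking σ a deterministic
algorithm outputs, some bipartite ground truth τ* gives σ loss exactly 2/3
while h has loss exactly 1/3. -/
theorem deterministic_lower_bound {V : Type*} [Fintype V] [DecidableEq V]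
    (u v w : V) (huv : u ≠ v) (hvw : v ≠ w) (huw : u ≠ w)
    (huniv : (Finset.univ : Finset V) = {u, v, w})
    (h : V → V → ℝ)
    (hbin : ∀ a b : V, h a b = 0 ∨ h a b = 1)
    (htour : ∀ a b : V, a ≠ b → h a b + h b a = 1)
    (hcyc : h u v = 1 ∧ h v w = 1 ∧ h w u = 1)
    (σ : V ≃ Fin 3) :
    ∃ τ : V → Fin 2,
      (3 : ℝ)⁻¹ * (∑ a : V, ∑ b : V,
          (if σ a < σ b then (1 : ℝ) else 0) * (if τ b < τ a then 1 else 0)) = 2 / 3 ∧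
      (3 : ℝ)⁻¹ * (∑ a : V, ∑ b : V,
          h a b * (if τ b < τ a then 1 else 0)) = 1 / 3 := by
  obtain ⟨h1, h2, h3⟩ := hcyc
  have hvu : h v u = 0 := by have := htour u v huv; linarith
  have hwv : h w v = 0 := by have := htour v w hvw; linarith
  have huw' : h u w = 0 := by have := htour w u huw.symm; linarith
  set c := σ.symm 2 with hc
  have hσc : σ c = 2 := σ.apply_symm_apply 2
  have hlt : ∀ x : V, x ≠ c → σ x < σ c := by
    intro x hx
    have hne : σ x ≠ σ c := fun e => hx (σ.injective e)
    rw [hσc] at hne ⊢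
    omega
  have hmem : c ∈ (Finset.univ : Finset V) := Finset.mem_univ c
  rw [huniv] at hmem
  simp only [Finset.mem_insert, Finset.mem_singleton] at hmem
  rcases hmem with rfl | rfl | rfl
  · -- c = u : use a = v, b = w
    refine ⟨fun z => if z = c then 0 else 1, ?_, ?_⟩
    · rw [sum_helper v w c hvw huw.symm huv.symm
        (by rw [huniv]; ext x; simp; tauto)]
      have l1 := hlt v huv.symm
      have l2 := hlt w huw.symm
      simp [l1, l2]; norm_num
    · rw [sum_helper v w c hvw huw.symm huv.symm
        (by rw [huniv]; ext x; simp; tauto)]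
      rw [hvu, h3]; norm_num
  · -- c = v : use a = w, b = u
    refine ⟨fun z => if z = c then 0 else 1, ?_, ?_⟩
    · rw [sum_helper w u c huw.symm huv hvw.symm
        (by rw [huniv]; ext x; simp; tauto)]
      have l1 := hlt w hvw.symm
      have l2 := hlt u huv
      simp [l1, l2]; norm_num
    · rw [sum_helper w u c huw.symm huv hvw.symm
        (by rw [huniv]; ext x; simp; tauto)]
      rw [hwv, h1]; norm_num
  · -- c = w : use a = u, b = v
    refine ⟨fun z => if z = c then 0 else 1, ?_, ?_⟩
    · rw [sum_helper u v c huv hvw huw huniv]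
      have l1 := hlt u huw
      have l2 := hlt v hvw
      simp [l1, l2]
      norm_num
    · rw [sum_helper u v c huv hvw huw huniv]
      rw [huw', h2]
      norm_num
end

section
/- Let V be a finite set of n elements, h a binary preference function on V, and for the random execution of QuickSort with pivots chosen uniformly at random let p_{uv} denote the probability that the pair {u,v} is compared directly (one of them chosen as pivot while both are in the same recursive call), and p_{uvw} the probability that all three of u,v,w are in the same recursive call when one of them is first chosen as pivot. Then for any function Z on unordered pairs of V: Σ_{u<v} Z_{uv} = Σ_{u<v} p_{uv}·Z_{uv} + Σ_{u<v<w} p_{uvw}·γ[Z]_{uvw}, where γ[Z]_{uvw} = (1/3)[(h(u,v)h(v,w)+h(w,v)h(v,u))Z_{uw} + (h(v,u)h(u,w)+h(w,u)h(u,v))Z_{vw} + (h(u,w)h(w,v)+h(v,w)h(w,u))Z_{uv}]. -/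
variable {V : Type*} [DecidableEq V]

/-- QuickSort on a list using a (possibly non-transitive) preference function:
the head is the pivot, elements preferred to the pivot go left.  Running it on
a uniformly random permutation of the input is equivalent to uniformly random
pivot selection. -/
def qsort (h : V → V → Bool) : List V → List V
  | [] => []
  | x :: xs =>
      qsort h (xs.filter (fun y => h y x)) ++ x :: qsort h (xs.filter (fun y => !(h y x)))
  termination_by l => l.length
  decreasing_by
    · simp only [List.length_cons]; exact Nat.lt_succ_of_le (by simp; exact (List.length_filter_le _ _).trans (by simp))
    · simp only [List.length_cons]; exact Nat.lt_succ_of_le (by simp; exact (List.length_filter_le _ _).trans (by simp))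

/-- The unordered pairs compared directly (pivot vs. element of its call). -/
def directPairs (h : V → V → Bool) : List V → List (Finset V)
  | [] => []
  | x :: xs =>
      xs.map (fun y => ({x, y} : Finset V)) ++
      (directPairs h (xs.filter (fun y => h y x)) ++
        directPairs h (xs.filter (fun y => !(h y x))))
  termination_by l => l.length
  decreasing_by
    · simp only [List.length_cons]; exact Nat.lt_succ_of_le (by simp; exact (List.length_filter_le _ _).trans (by simp))
    · simp only [List.length_cons]; exact Nat.lt_succ_of_le (by simp; exact (List.length_filter_le _ _).trans (by simp))

/-- The unordered triples present together in a recursive call whose pivot is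
one of them. -/
def pivotTriples (h : V → V → Bool) : List V → List (Finset V)
  | [] => []
  | x :: xs =>
      (xs.product xs).map (fun p => ({x, p.1, p.2} : Finset V)) ++
      (pivotTriples h (xs.filter (fun y => h y x)) ++
        pivotTriples h (xs.filter (fun y => !(h y x))))
  termination_by l => l.length
  decreasing_by
    · simp only [List.length_cons]; exact Nat.lt_succ_of_le (by simp; exact (List.length_filter_le _ _).trans (by simp))
    · simp only [List.length_cons]; exact Nat.lt_succ_of_le (by simp; exact (List.length_filter_le _ _).trans (by simp))

/-- Expectation of `f` of the input list over a uniformly random ordering of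
`V` (equivalently, over the random bits of QuickSort's pivot choices). -/
noncomputable def qsExp [Fintype V] (f : List V → ℝ) : ℝ :=
  (((Finset.univ : Finset V).toList.permutations.map f).sum) /
    (Nat.factorial (Fintype.card V))

/-- p_{uv}: the probability that the pair {u,v} is compared directly. -/
noncomputable def pPair [Fintype V] (h : V → V → Bool) (u v : V) : ℝ :=
  qsExp (fun l => if ({u, v} : Finset V) ∈ directPairs h l then 1 else 0)

/-- p_{uvw}: the probability that u, v, w are in the same recursive call when
one of them is first chosen as pivot. -/
noncomputable def pTriple [Fintype V] (h : V → V → Bool) (u v w : V) : ℝ :=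
  qsExp (fun l => if ({u, v, w} : Finset V) ∈ pivotTriples h l then 1 else 0)

/-- The {0,1}-valued preference function as a real number. -/
def hr (h : V → V → Bool) (a b : V) : ℝ := if h a b then 1 else 0

/-- Indicator that `u` is ranked before `v` in the output list. -/
def rankBefore (l : List V) (u v : V) : ℝ := if l.idxOf u < l.idxOf v then 1 else 0

lemma pT_nil (h : V → V → Bool) : pivotTriples h [] = [] := by rw [pivotTriples]

lemma pT_cons (h : V → V → Bool) (x : V) (xs : List V) :
    pivotTriples h (x :: xs) =
      (xs.product xs).map (fun p => ({x, p.1, p.2} : Finset V)) ++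
        (pivotTriples h (xs.filter (fun y => h y x)) ++
          pivotTriples h (xs.filter (fun y => !(h y x)))) := by
  rw [pivotTriples]

lemma mem_of_mem_pT (h : V → V → Bool) :
    ∀ (n : ℕ) (l : List V), l.length ≤ n → ∀ t ∈ pivotTriples h l, ∀ z ∈ t, z ∈ l := by
  intro n
  induction n with
  | zero =>
    intro l hl
    have : l = [] := List.eq_nil_of_length_eq_zero (Nat.le_zero.mp hl)
    subst this; simp [pT_nil]
  | succ n IH =>
    intro l hl t ht z hz
    cases l with
    | nil => simp [pT_nil] at ht
    | cons a xs =>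
      have hxs : xs.length ≤ n := by
        simp only [List.length_cons] at hl; omega
      rw [pT_cons] at ht
      rcases List.mem_append.1 ht with h1 | h2
      · obtain ⟨p, hp, rfl⟩ := List.mem_map.1 h1
        obtain ⟨p1, p2⟩ := p
        rw [List.pair_mem_product] at hp
        simp only [Finset.mem_insert, Finset.mem_singleton] at hz
        rcases hz with rfl | rfl | rfl
        · exact List.mem_cons_self
        · exact List.mem_cons_of_mem _ hp.1
        · exact List.mem_cons_of_mem _ hp.2
      · rcases List.mem_append.1 h2 with h3 | h3
        · have := IH _ ((List.length_filter_le _ _).trans hxs) t h3 z hz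
          exact List.mem_cons_of_mem _ (List.mem_of_mem_filter this)
        · have := IH _ ((List.length_filter_le _ _).trans hxs) t h3 z hz
          exact List.mem_cons_of_mem _ (List.mem_of_mem_filter this)

lemma dP_nil (h : V → V → Bool) : directPairs h [] = [] := by rw [directPairs]

lemma dP_cons (h : V → V → Bool) (x : V) (xs : List V) :
    directPairs h (x :: xs) =
      xs.map (fun y => ({x, y} : Finset V)) ++
        (directPairs h (xs.filter (fun y => h y x)) ++
          directPairs h (xs.filter (fun y => !(h y x)))) := by
  rw [directPairs]

lemma mem_of_mem_dP (h : V → V → Bool) :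
    ∀ (n : ℕ) (l : List V), l.length ≤ n → ∀ t ∈ directPairs h l, ∀ z ∈ t, z ∈ l := by
  intro n
  induction n with
  | zero =>
    intro l hl
    have : l = [] := List.eq_nil_of_length_eq_zero (Nat.le_zero.mp hl)
    subst this; simp [dP_nil]
  | succ n IH =>
    intro l hl t ht z hz
    cases l with
    | nil => simp [dP_nil] at ht
    | cons a xs =>
      have hxs : xs.length ≤ n := by
        simp only [List.length_cons] at hl; omega
      rw [dP_cons] at ht
      rcases List.mem_append.1 ht with h1 | h2
      · obtain ⟨y, hy, rfl⟩ := List.mem_map.1 h1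
        simp only [Finset.mem_insert, Finset.mem_singleton] at hz
        rcases hz with rfl | rfl
        · exact List.mem_cons_self
        · exact List.mem_cons_of_mem _ hy
      · rcases List.mem_append.1 h2 with h3 | h3
        · have := IH _ ((List.length_filter_le _ _).trans hxs) t h3 z hz
          exact List.mem_cons_of_mem _ (List.mem_of_mem_filter this)
        · have := IH _ ((List.length_filter_le _ _).trans hxs) t h3 z hz
          exact List.mem_cons_of_mem _ (List.mem_of_mem_filter this)

/-- The canonical "decision" for the pair {u,v}: `some none` means direct
comparison; `some (some c)` means separated by pivot `c`. -/
def decideUV (h : V → V → Bool) (u v : V) : List V → Option (Option V)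
  | [] => none
  | x :: xs =>
    if x = u ∨ x = v then some none
    else if u ∈ xs ∧ v ∈ xs then
      if h u x = h v x then decideUV h u v (xs.filter (fun y => decide (h y x = h u x)))
      else some (some x)
    else none
  termination_by l => l.length
  decreasing_by
    simp only [List.length_cons]; exact Nat.lt_succ_of_le (by simp; exact (List.length_filter_le _ _).trans (by simp))

lemma decideUV_nil (h : V → V → Bool) (u v : V) : decideUV h u v [] = none := by
  rw [decideUV]

lemma decideUV_cons (h : V → V → Bool) (u v x : V) (xs : List V) :
    decideUV h u v (x :: xs) =
      if x = u ∨ x = v then some none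
      else if u ∈ xs ∧ v ∈ xs then
        if h u x = h v x then decideUV h u v (xs.filter (fun y => decide (h y x = h u x)))
        else some (some x)
      else none := by
  rw [decideUV]

lemma decideUV_some (h : V → V → Bool) (u v : V) :
    ∀ (n : ℕ) (l : List V), l.length ≤ n → ∀ c, decideUV h u v l = some (some c) →
      c ∈ l ∧ c ≠ u ∧ c ≠ v ∧ h u c ≠ h v c := by
  intro n
  induction n with
  | zero =>
    intro l hl c hc
    have : l = [] := List.eq_nil_of_length_eq_zero (Nat.le_zero.mp hl)
    subst this; simp [decideUV_nil] at hc
  | succ n IH =>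
    intro l hl c hc
    cases l with
    | nil => simp [decideUV_nil] at hc
    | cons x xs =>
      have hxs : xs.length ≤ n := by simp only [List.length_cons] at hl; omega
      rw [decideUV_cons] at hc
      by_cases hx : x = u ∨ x = v
      · simp [hx] at hc
      · rw [if_neg hx] at hc
        by_cases hm : u ∈ xs ∧ v ∈ xs
        · rw [if_pos hm] at hc
          by_cases he : h u x = h v x
          · rw [if_pos he] at hc
            obtain ⟨hc1, hc2, hc3, hc4⟩ :=
              IH _ ((List.length_filter_le _ _).trans hxs) c hc
            exact ⟨List.mem_cons_of_mem _ (List.mem_of_mem_filter hc1), hc2, hc3, hc4⟩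
          · rw [if_neg he] at hc
            obtain rfl : x = c := by simpa using hc
            push_neg at hx
            exact ⟨List.mem_cons_self, hx.1, hx.2, he⟩
        · simp [hm] at hc

lemma decideUV_ne_none (h : V → V → Bool) (u v : V) (huv : u ≠ v) :
    ∀ (n : ℕ) (l : List V), l.length ≤ n → l.Nodup → u ∈ l → v ∈ l →
      decideUV h u v l ≠ none := by
  intro n
  induction n with
  | zero =>
    intro l hl _ hu _
    have : l = [] := List.eq_nil_of_length_eq_zero (Nat.le_zero.mp hl)
    subst this; simp at hu
  | succ n IH =>
    intro l hl hnd hu hv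
    cases l with
    | nil => simp at hu
    | cons x xs =>
      have hxs : xs.length ≤ n := by simp only [List.length_cons] at hl; omega
      rw [decideUV_cons]
      by_cases hx : x = u ∨ x = v
      · simp [hx]
      · have hx' := hx
        push_neg at hx'
        have hu' : u ∈ xs := by
          rcases List.mem_cons.1 hu with rfl | h'
          · exact absurd rfl hx'.1
          · exact h'
        have hv' : v ∈ xs := by
          rcases List.mem_cons.1 hv with rfl | h'
          · exact absurd rfl hx'.2
          · exact h'
        rw [if_neg hx, if_pos ⟨hu', hv'⟩]
        by_cases he : h u x = h v x
        · rw [if_pos he]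
          apply IH _ ((List.length_filter_le _ _).trans hxs)
          · exact ((List.nodup_cons.mp hnd).2).filter _
          · exact List.mem_filter.2 ⟨hu', by simp⟩
          · exact List.mem_filter.2 ⟨hv', by simpa using he.symm⟩
        · rw [if_neg he]; simp

lemma filter_decide_pos (h : V → V → Bool) (u x : V) (xs : List V) (hux : h u x = true) :
    xs.filter (fun y => decide (h y x = h u x)) = xs.filter (fun y => h y x) :=
  List.filter_congr (fun y _ => by rw [hux]; cases h y x <;> simp)

lemma filter_decide_neg (h : V → V → Bool) (u x : V) (xs : List V) (hux : h u x = false) :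
    xs.filter (fun y => decide (h y x = h u x)) = xs.filter (fun y => !(h y x)) :=
  List.filter_congr (fun y _ => by rw [hux]; cases h y x <;> simp)

lemma decideUV_direct (h : V → V → Bool) (u v : V) (huv : u ≠ v) :
    ∀ (n : ℕ) (l : List V), l.length ≤ n → l.Nodup → u ∈ l → v ∈ l →
      (decideUV h u v l = some none ↔ ({u, v} : Finset V) ∈ directPairs h l) := by
  intro n
  induction n with
  | zero =>
    intro l hl _ hu _
    have : l = [] := List.eq_nil_of_length_eq_zero (Nat.le_zero.mp hl)
    subst this; simp at hu
  | succ n IH =>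
    intro l hl hnd hu hv
    cases l with
    | nil => simp at hu
    | cons x xs =>
      have hxs : xs.length ≤ n := by simp only [List.length_cons] at hl; omega
      have hndxs : xs.Nodup := (List.nodup_cons.mp hnd).2
      rw [decideUV_cons, dP_cons]
      simp only [List.mem_append, List.mem_map]
      by_cases hx : x = u ∨ x = v
      · rw [if_pos hx]
        have hex : ∃ a ∈ xs, ({x, a} : Finset V) = {u, v} := by
          rcases hx with rfl | rfl
          · refine ⟨v, ?_, rfl⟩
            rcases List.mem_cons.1 hv with h' | h'
            · exact absurd h'.symm huv
            · exact h'
          · refine ⟨u, ?_, by rw [Finset.pair_comm]⟩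
            rcases List.mem_cons.1 hu with h' | h'
            · exact absurd h' huv
            · exact h'
        exact iff_of_true rfl (Or.inl hex)
      · rw [if_neg hx]
        push_neg at hx
        have hu' : u ∈ xs := by
          rcases List.mem_cons.1 hu with rfl | h'
          · exact absurd rfl hx.1
          · exact h'
        have hv' : v ∈ xs := by
          rcases List.mem_cons.1 hv with rfl | h'
          · exact absurd rfl hx.2
          · exact h'
        rw [if_pos ⟨hu', hv'⟩]
        have hhead : ¬ ∃ y ∈ xs, ({x, y} : Finset V) = {u, v} := by
          rintro ⟨y, _, hy⟩
          have : x ∈ ({u, v} : Finset V) := by rw [← hy]; simp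
          simp only [Finset.mem_insert, Finset.mem_singleton] at this
          rcases this with rfl | rfl
          · exact hx.1 rfl
          · exact hx.2 rfl
        by_cases he : h u x = h v x
        · rw [if_pos he]
          by_cases hux : h u x = true
          · rw [filter_decide_pos h u x xs hux]
            have hvx : h v x = true := he ▸ hux
            have notright : ({u, v} : Finset V) ∉ directPairs h (xs.filter (fun y => !(h y x))) := by
              intro hmem
              have := mem_of_mem_dP h _ _ le_rfl _ hmem u (by simp)
              have := (List.mem_filter.1 this).2
              simp [hux] at this
            rw [IH _ ((List.length_filter_le _ _).trans hxs) (hndxs.filter _)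
              (List.mem_filter.2 ⟨hu', hux⟩) (List.mem_filter.2 ⟨hv', hvx⟩)]
            constructor
            · intro hm; exact Or.inr (Or.inl hm)
            · rintro (hex | hm | hm)
              · exact absurd hex hhead
              · exact hm
              · exact absurd hm notright
          · have hux' : h u x = false := by simpa using hux
            rw [filter_decide_neg h u x xs hux']
            have hvx : h v x = false := he ▸ hux'
            have notleft : ({u, v} : Finset V) ∉ directPairs h (xs.filter (fun y => h y x)) := by
              intro hmem
              have := mem_of_mem_dP h _ _ le_rfl _ hmem u (by simp)
              have := (List.mem_filter.1 this).2
              simp [hux'] at this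
            rw [IH _ ((List.length_filter_le _ _).trans hxs) (hndxs.filter _)
              (List.mem_filter.2 ⟨hu', by simp [hux']⟩) (List.mem_filter.2 ⟨hv', by simp [hvx]⟩)]
            constructor
            · intro hm; exact Or.inr (Or.inr hm)
            · rintro (hex | hm | hm)
              · exact absurd hex hhead
              · exact absurd hm notleft
              · exact hm
        · rw [if_neg he]
          have notleft : ({u, v} : Finset V) ∉ directPairs h (xs.filter (fun y => h y x)) := by
            intro hmem
            have h1 := mem_of_mem_dP h _ _ le_rfl _ hmem u (by simp)
            have h2 := mem_of_mem_dP h _ _ le_rfl _ hmem v (by simp)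
            exact he ((List.mem_filter.1 h1).2.trans (List.mem_filter.1 h2).2.symm)
          have notright : ({u, v} : Finset V) ∉ directPairs h (xs.filter (fun y => !(h y x))) := by
            intro hmem
            have h1 := mem_of_mem_dP h _ _ le_rfl _ hmem u (by simp)
            have h2 := mem_of_mem_dP h _ _ le_rfl _ hmem v (by simp)
            have e1 := (List.mem_filter.1 h1).2
            have e2 := (List.mem_filter.1 h2).2
            simp only [Bool.not_eq_true'] at e1 e2
            exact he (e1.trans e2.symm)
          constructor
          · intro hco; simp at hco
          · rintro (⟨y, hy, hxy⟩ | hmem | hmem)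
            · exact absurd ⟨y, hy, hxy⟩ hhead
            · exact absurd hmem notleft
            · exact absurd hmem notright

lemma find?_filter' (p q : V → Bool) :
    ∀ (m : List V), (∀ y ∈ m, p y = true → q y = true) →
      (m.filter q).find? p = m.find? p := by
  intro m
  induction m with
  | nil => simp
  | cons a m IH =>
    intro hpq
    by_cases hq : q a = true
    · rw [List.filter_cons_of_pos hq]
      by_cases hp : p a = true
      · rw [List.find?_cons_of_pos hp, List.find?_cons_of_pos hp]
      · rw [List.find?_cons_of_neg hp, List.find?_cons_of_neg hp]
        exact IH (fun y hy => hpq y (List.mem_cons_of_mem _ hy))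
    · have hp : ¬ p a = true := fun hpa => hq (hpq a (List.mem_cons_self) hpa)
      rw [List.filter_cons_of_neg (by simpa using hq), List.find?_cons_of_neg hp]
      exact IH (fun y hy => hpq y (List.mem_cons_of_mem _ hy))

lemma decideUV_sep (h : V → V → Bool) (u v w : V) (huv : u ≠ v) (huw : u ≠ w)
    (hvw : v ≠ w) (hw : h u w ≠ h v w) :
    ∀ (n : ℕ) (l : List V), l.length ≤ n → l.Nodup → u ∈ l → v ∈ l →
      (decideUV h u v l = some (some w) ↔
        (({u, v, w} : Finset V) ∈ pivotTriples h l ∧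
          l.find? (fun y => decide (y = u ∨ y = v ∨ y = w)) = some w)) := by
  intro n
  induction n with
  | zero =>
    intro l hl _ hu _
    have : l = [] := List.eq_nil_of_length_eq_zero (Nat.le_zero.mp hl)
    subst this; simp at hu
  | succ n IH =>
    intro l hl hnd hu hv
    cases l with
    | nil => simp at hu
    | cons x xs =>
      have hxs : xs.length ≤ n := by simp only [List.length_cons] at hl; omega
      have hndxs : xs.Nodup := (List.nodup_cons.mp hnd).2
      rw [decideUV_cons]
      by_cases hxu : x = u
      · rw [if_pos (Or.inl hxu)]
        have hf : List.find? (fun y => decide (y = u ∨ y = v ∨ y = w)) (x :: xs) = some x :=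
          List.find?_cons_of_pos (by simp [hxu])
        have hxw : x ≠ w := by rw [hxu]; exact huw
        rw [hf]
        simp [hxw]
      · by_cases hxv : x = v
        · rw [if_pos (Or.inr hxv)]
          have hf : List.find? (fun y => decide (y = u ∨ y = v ∨ y = w)) (x :: xs) = some x :=
            List.find?_cons_of_pos (by simp [hxv])
          have hxw : x ≠ w := by rw [hxv]; exact hvw
          rw [hf]
          simp [hxw]
        · have hu' : u ∈ xs := by
            rcases List.mem_cons.1 hu with rfl | h' 
            · exact absurd rfl hxu
            · exact h'
          have hv' : v ∈ xs := by
            rcases List.mem_cons.1 hv with rfl | h'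
            · exact absurd rfl hxv
            · exact h'
          rw [if_neg (by push_neg; exact ⟨hxu, hxv⟩), if_pos ⟨hu', hv'⟩]
          by_cases hxw : x = w
          · have he' : ¬ (h u x = h v x) := by rw [hxw]; exact hw
            rw [if_neg he']
            have hf : List.find? (fun y => decide (y = u ∨ y = v ∨ y = w)) (x :: xs) = some x :=
              List.find?_cons_of_pos (by simp [hxw])
            rw [hf]
            refine iff_of_true ?_ ⟨?_, by rw [hxw]⟩
            · rw [hxw]
            · rw [pT_cons]
              refine List.mem_append.2 (Or.inl (List.mem_map.2 ⟨(u, v),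
                List.pair_mem_product.2 ⟨hu', hv'⟩, ?_⟩))
              ext z; simp [hxw]; tauto
          · have hf : List.find? (fun y => decide (y = u ∨ y = v ∨ y = w)) (x :: xs) =
                List.find? (fun y => decide (y = u ∨ y = v ∨ y = w)) xs :=
              List.find?_cons_of_neg (by simp [hxu, hxv, hxw])
            rw [hf]
            have hpT : (({u, v, w} : Finset V) ∈ pivotTriples h (x :: xs)) ↔
                (({u, v, w} : Finset V) ∈ pivotTriples h (xs.filter (fun y => h y x)) ∨
                 ({u, v, w} : Finset V) ∈ pivotTriples h (xs.filter (fun y => !(h y x)))) := by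
              rw [pT_cons]
              simp only [List.mem_append, List.mem_map]
              constructor
              · rintro (⟨p, _, hpe⟩ | hm | hm)
                · exfalso
                  have hxm : x ∈ ({u, v, w} : Finset V) := hpe ▸ (by simp)
                  simp only [Finset.mem_insert, Finset.mem_singleton] at hxm
                  rcases hxm with rfl | rfl | rfl
                  · exact hxu rfl
                  · exact hxv rfl
                  · exact hxw rfl
                · exact Or.inl hm
                · exact Or.inr hm
              · rintro (hm | hm)
                · exact Or.inr (Or.inl hm)
                · exact Or.inr (Or.inr hm)
            rw [hpT]
            by_cases he : h u x = h v x
            · rw [if_pos he]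
              by_cases hwxs : w ∈ xs
              · by_cases hwx : h w x = h u x
                · -- u, v, w all on the same side
                  by_cases hux : h u x = true
                  · rw [filter_decide_pos h u x xs hux]
                    have hvx : h v x = true := he ▸ hux
                    have hwx' : h w x = true := hwx.trans hux
                    have hfs : (xs.filter (fun y => h y x)).find?
                        (fun y => decide (y = u ∨ y = v ∨ y = w)) =
                        xs.find? (fun y => decide (y = u ∨ y = v ∨ y = w)) := by
                      apply find?_filter'
                      intro y _ hy
                      simp only [decide_eq_true_eq] at hy
                      rcases hy with rfl | rfl | rfl
                      · exact hux
                      · exact hvx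
                      · exact hwx'
                    have hnr : ({u, v, w} : Finset V) ∉
                        pivotTriples h (xs.filter (fun y => !(h y x))) := by
                      intro hm
                      have := mem_of_mem_pT h _ _ le_rfl _ hm u (by simp)
                      have := (List.mem_filter.1 this).2
                      simp [hux] at this
                    rw [IH _ ((List.length_filter_le _ _).trans hxs) (hndxs.filter _)
                      (List.mem_filter.2 ⟨hu', hux⟩) (List.mem_filter.2 ⟨hv', hvx⟩), hfs]
                    tauto
                  · have hux' : h u x = false := by simpa using hux
                    rw [filter_decide_neg h u x xs hux']
                    have hvx : h v x = false := he ▸ hux'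
                    have hwx' : h w x = false := hwx.trans hux'
                    have hfs : (xs.filter (fun y => !(h y x))).find?
                        (fun y => decide (y = u ∨ y = v ∨ y = w)) =
                        xs.find? (fun y => decide (y = u ∨ y = v ∨ y = w)) := by
                      apply find?_filter'
                      intro y _ hy
                      simp only [decide_eq_true_eq] at hy
                      rcases hy with rfl | rfl | rfl
                      · simp [hux']
                      · simp [hvx]
                      · simp [hwx']
                    have hnl : ({u, v, w} : Finset V) ∉
                        pivotTriples h (xs.filter (fun y => h y x)) := by
                      intro hm
                      have := mem_of_mem_pT h _ _ le_rfl _ hm u (by simp)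
                      have := (List.mem_filter.1 this).2
                      simp [hux'] at this
                    rw [IH _ ((List.length_filter_le _ _).trans hxs) (hndxs.filter _)
                      (List.mem_filter.2 ⟨hu', by simp [hux']⟩)
                      (List.mem_filter.2 ⟨hv', by simp [hvx]⟩), hfs]
                    tauto
                · -- w on the other side from u, v : both sides false
                  refine iff_of_false ?_ ?_
                  · intro hc
                    obtain ⟨hc1, _, _, _⟩ := decideUV_some h u v _ _ le_rfl w hc
                    have := (List.mem_filter.1 hc1).2
                    simp only [decide_eq_true_eq] at this
                    exact hwx this
                  · rintro ⟨hA | hA, _⟩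
                    · have h1 := mem_of_mem_pT h _ _ le_rfl _ hA u (by simp)
                      have h2 := mem_of_mem_pT h _ _ le_rfl _ hA w (by simp)
                      have e1 := (List.mem_filter.1 h1).2
                      have e2 := (List.mem_filter.1 h2).2
                      exact hwx (e2.trans e1.symm)
                    · have h1 := mem_of_mem_pT h _ _ le_rfl _ hA u (by simp)
                      have h2 := mem_of_mem_pT h _ _ le_rfl _ hA w (by simp)
                      have e1 := (List.mem_filter.1 h1).2
                      have e2 := (List.mem_filter.1 h2).2
                      simp only [Bool.not_eq_true'] at e1 e2
                      exact hwx (e2.trans e1.symm)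
              · -- w not in the list: both sides false
                refine iff_of_false ?_ ?_
                · intro hc
                  obtain ⟨hc1, _, _, _⟩ := decideUV_some h u v _ _ le_rfl w hc
                  exact hwxs (List.mem_of_mem_filter hc1)
                · rintro ⟨hA | hA, _⟩
                  · exact hwxs (List.mem_of_mem_filter
                      (mem_of_mem_pT h _ _ le_rfl _ hA w (by simp)))
                  · exact hwxs (List.mem_of_mem_filter
                      (mem_of_mem_pT h _ _ le_rfl _ hA w (by simp)))
            · rw [if_neg he]
              refine iff_of_false (by simp [hxw]) ?_
              rintro ⟨hA | hA, _⟩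
              · have h1 := mem_of_mem_pT h _ _ le_rfl _ hA u (by simp)
                have h2 := mem_of_mem_pT h _ _ le_rfl _ hA v (by simp)
                exact he (((List.mem_filter.1 h1).2).trans ((List.mem_filter.1 h2).2).symm)
              · have h1 := mem_of_mem_pT h _ _ le_rfl _ hA u (by simp)
                have h2 := mem_of_mem_pT h _ _ le_rfl _ hA v (by simp)
                have e1 := (List.mem_filter.1 h1).2
                have e2 := (List.mem_filter.1 h2).2
                simp only [Bool.not_eq_true'] at e1 e2
                exact he (e1.trans e2.symm)

lemma pT_map_iff (h : V → V → Bool) (u v w : V) (huv : u ≠ v) (huw : u ≠ w) (hvw : v ≠ w)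
    (σ : Equiv.Perm V) (hfix : ∀ y, y ≠ u → y ≠ v → y ≠ w → σ y = y) :
    ∀ (n : ℕ) (l : List V), l.length ≤ n → l.Nodup →
      (({u, v, w} : Finset V) ∈ pivotTriples h l ↔
        ({u, v, w} : Finset V) ∈ pivotTriples h (l.map σ)) := by
  have hS : ∀ y : V, (σ y = u ∨ σ y = v ∨ σ y = w) ↔ (y = u ∨ y = v ∨ y = w) := by
    intro y
    constructor
    · intro hy
      by_contra hy'
      push_neg at hy'
      rw [hfix y hy'.1 hy'.2.1 hy'.2.2] at hy
      rcases hy with e | e | e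
      · exact hy'.1 e
      · exact hy'.2.1 e
      · exact hy'.2.2 e
    · intro hy
      by_contra hσ
      push_neg at hσ
      have h1 := hfix (σ y) hσ.1 hσ.2.1 hσ.2.2
      have h2 : σ y = y := σ.injective h1
      rw [h2] at hσ
      rcases hy with e | e | e
      · exact hσ.1 e
      · exact hσ.2.1 e
      · exact hσ.2.2 e
  have hS2 : ∀ y : V, (σ.symm y = u ∨ σ.symm y = v ∨ σ.symm y = w) ↔
      (y = u ∨ y = v ∨ y = w) := by
    intro y
    have := (hS (σ.symm y)).symm
    simpa using this
  have hmm : ∀ (m : List V) (z : V), z ∈ m.map σ ↔ σ.symm z ∈ m := by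
    intro m z
    rw [List.mem_map]
    constructor
    · rintro ⟨a, ha, rfl⟩; simpa using ha
    · intro hz; exact ⟨σ.symm z, hz, by simp⟩
  have hSmem : ∀ (m : List V),
      (u ∈ m.map σ ∧ v ∈ m.map σ ∧ w ∈ m.map σ) ↔ (u ∈ m ∧ v ∈ m ∧ w ∈ m) := by
    intro m
    rw [hmm, hmm, hmm]
    constructor
    · rintro ⟨h1, h2, h3⟩
      have get : ∀ z : V, (z = u ∨ z = v ∨ z = w) → z ∈ m := by
        intro z hz
        rcases (hS z).mpr hz with e | e | e
        · have : σ.symm u = z := by rw [← e]; exact σ.symm_apply_apply z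
          exact this ▸ h1
        · have : σ.symm v = z := by rw [← e]; exact σ.symm_apply_apply z
          exact this ▸ h2
        · have : σ.symm w = z := by rw [← e]; exact σ.symm_apply_apply z
          exact this ▸ h3
      exact ⟨get u (Or.inl rfl), get v (Or.inr (Or.inl rfl)), get w (Or.inr (Or.inr rfl))⟩
    · rintro ⟨h1, h2, h3⟩
      have get : ∀ z : V, (z = u ∨ z = v ∨ z = w) → σ.symm z ∈ m := by
        intro z hz
        rcases (hS2 z).mpr hz with e | e | e
        · rw [e]; exact h1
        · rw [e]; exact h2
        · rw [e]; exact h3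
      exact ⟨get u (Or.inl rfl), get v (Or.inr (Or.inl rfl)), get w (Or.inr (Or.inr rfl))⟩
  have hstep : ∀ (x' : V) (xs' : List V), x' ≠ u → x' ≠ v → x' ≠ w →
      (({u, v, w} : Finset V) ∈ pivotTriples h (x' :: xs') ↔
        (({u, v, w} : Finset V) ∈ pivotTriples h (xs'.filter (fun y => h y x')) ∨
         ({u, v, w} : Finset V) ∈ pivotTriples h (xs'.filter (fun y => !(h y x'))))) := by
    intro x' xs' h1 h2 h3
    rw [pT_cons]
    simp only [List.mem_append, List.mem_map]
    constructor
    · rintro (⟨p, _, hpe⟩ | hm | hm)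
      · exfalso
        have hxm : x' ∈ ({u, v, w} : Finset V) := hpe ▸ (by simp)
        simp only [Finset.mem_insert, Finset.mem_singleton] at hxm
        rcases hxm with rfl | rfl | rfl
        · exact h1 rfl
        · exact h2 rfl
        · exact h3 rfl
      · exact Or.inl hm
      · exact Or.inr hm
    · rintro (hm | hm)
      · exact Or.inr (Or.inl hm)
      · exact Or.inr (Or.inr hm)
  have habs : ∀ (q : V → Bool) (m : List V),
      ({u, v, w} : Finset V) ∈ pivotTriples h (m.filter q) →
        q u = true ∧ q v = true ∧ q w = true := by
    intro q m hm
    exact ⟨(List.mem_filter.1 (mem_of_mem_pT h _ _ le_rfl _ hm u (by simp))).2,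
      (List.mem_filter.1 (mem_of_mem_pT h _ _ le_rfl _ hm v (by simp))).2,
      (List.mem_filter.1 (mem_of_mem_pT h _ _ le_rfl _ hm w (by simp))).2⟩
  intro n
  induction n with
  | zero =>
    intro l hl _
    have : l = [] := List.eq_nil_of_length_eq_zero (Nat.le_zero.mp hl)
    subst this; simp [pT_nil]
  | succ n IH =>
    intro l hl hnd
    cases l with
    | nil => simp [pT_nil]
    | cons x xs =>
      have hxs : xs.length ≤ n := by simp only [List.length_cons] at hl; omega
      have hndxs : xs.Nodup := (List.nodup_cons.mp hnd).2
      rw [List.map_cons]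
      by_cases hx : x = u ∨ x = v ∨ x = w
      · have hchar : ∀ (x' : V) (xs' : List V), (x' :: xs').Nodup →
            (x' = u ∨ x' = v ∨ x' = w) →
            (({u, v, w} : Finset V) ∈ pivotTriples h (x' :: xs') ↔
              (u ∈ x' :: xs' ∧ v ∈ x' :: xs' ∧ w ∈ x' :: xs')) := by
          intro x' xs' hnd' hx'
          constructor
          · intro hm
            exact ⟨mem_of_mem_pT h _ _ le_rfl _ hm u (by simp),
              mem_of_mem_pT h _ _ le_rfl _ hm v (by simp),
              mem_of_mem_pT h _ _ le_rfl _ hm w (by simp)⟩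
          · rintro ⟨hum, hvm, hwm⟩
            rw [pT_cons]
            refine List.mem_append.2 (Or.inl (List.mem_map.2 ?_))
            rcases hx' with rfl | rfl | rfl
            · have hv2 : v ∈ xs' := by
                rcases List.mem_cons.1 hvm with e | e
                · exact absurd e.symm huv
                · exact e
              have hw2 : w ∈ xs' := by
                rcases List.mem_cons.1 hwm with e | e
                · exact absurd e.symm huw
                · exact e
              exact ⟨(v, w), List.pair_mem_product.2 ⟨hv2, hw2⟩, rfl⟩
            · have hu2 : u ∈ xs' := by
                rcases List.mem_cons.1 hum with e | e
                · exact absurd e huv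
                · exact e
              have hw2 : w ∈ xs' := by
                rcases List.mem_cons.1 hwm with e | e
                · exact absurd e.symm hvw
                · exact e
              exact ⟨(u, w), List.pair_mem_product.2 ⟨hu2, hw2⟩, by ext z; simp; tauto⟩
            · have hu2 : u ∈ xs' := by
                rcases List.mem_cons.1 hum with e | e
                · exact absurd e huw
                · exact e
              have hv2 : v ∈ xs' := by
                rcases List.mem_cons.1 hvm with e | e
                · exact absurd e hvw
                · exact e
              exact ⟨(u, v), List.pair_mem_product.2 ⟨hu2, hv2⟩, by ext z; simp; tauto⟩
        have hndm : ((x :: xs).map σ).Nodup := hnd.map σ.injective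
        rw [List.map_cons] at hndm
        rw [hchar x xs hnd hx, hchar (σ x) (xs.map σ) hndm ((hS x).mpr hx)]
        have : (σ x :: xs.map σ) = (x :: xs).map σ := by rw [List.map_cons]
        rw [this]
        exact (hSmem (x :: xs)).symm
      · push_neg at hx
        have hσx : σ x = x := hfix x hx.1 hx.2.1 hx.2.2
        rw [hσx, hstep x xs hx.1 hx.2.1 hx.2.2, hstep x (xs.map σ) hx.1 hx.2.1 hx.2.2]
        by_cases hcon : h u x = h v x ∧ h u x = h w x
        · have haux : ∀ y ∈ xs, h (σ y) x = h y x := by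
            intro y _
            by_cases hyS : y = u ∨ y = v ∨ y = w
            · have hc : ∀ z : V, (z = u ∨ z = v ∨ z = w) → h z x = h u x := by
                rintro z (rfl | rfl | rfl)
                · rfl
                · exact hcon.1.symm
                · exact hcon.2.symm
              rw [hc (σ y) ((hS y).mpr hyS), hc y hyS]
            · push_neg at hyS
              rw [hfix y hyS.1 hyS.2.1 hyS.2.2]
          have hf1 : (xs.map σ).filter (fun y => h y x) =
              (xs.filter (fun y => h y x)).map σ := by
            rw [List.filter_map]
            congr 1
            exact List.filter_congr (fun y hy => by simp only [Function.comp]; rw [haux y hy])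
          have hf2 : (xs.map σ).filter (fun y => !(h y x)) =
              (xs.filter (fun y => !(h y x))).map σ := by
            rw [List.filter_map]
            congr 1
            exact List.filter_congr (fun y hy => by simp only [Function.comp]; rw [haux y hy])
          rw [hf1, hf2]
          exact or_congr
            (IH _ ((List.length_filter_le _ _).trans hxs) (hndxs.filter _))
            (IH _ ((List.length_filter_le _ _).trans hxs) (hndxs.filter _))
        · have c1 : ∀ m : List V,
              ({u, v, w} : Finset V) ∈ pivotTriples h (m.filter (fun y => h y x)) → False := by
            intro m hA
            obtain ⟨e1, e2, e3⟩ := habs _ m hA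
            exact hcon ⟨e1.trans e2.symm, e1.trans e3.symm⟩
          have c2 : ∀ m : List V,
              ({u, v, w} : Finset V) ∈ pivotTriples h (m.filter (fun y => !(h y x))) → False := by
            intro m hA
            obtain ⟨e1, e2, e3⟩ := habs _ m hA
            simp only [Bool.not_eq_true'] at e1 e2 e3
            exact hcon ⟨e1.trans e2.symm, e1.trans e3.symm⟩
          exact iff_of_false (fun hA => hA.elim (c1 xs) (c2 xs))
            (fun hA => hA.elim (c1 (xs.map σ)) (c2 (xs.map σ)))

section Perms
variable [Fintype V]

noncomputable def permsF (V : Type*) [DecidableEq V] [Fintype V] : Finset (List V) :=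
  ((Finset.univ : Finset V).toList.permutations).toFinset

lemma mem_permsF {l : List V} : l ∈ permsF V ↔ l.Perm (Finset.univ : Finset V).toList := by
  rw [permsF, List.mem_toFinset, List.mem_permutations]

lemma nodup_of_mem_permsF {l : List V} (hl : l ∈ permsF V) : l.Nodup :=
  (mem_permsF.1 hl).nodup_iff.2 (Finset.nodup_toList _)

lemma mem_of_mem_permsF {l : List V} (hl : l ∈ permsF V) (z : V) : z ∈ l :=
  (mem_permsF.1 hl).mem_iff.2 (by simp)

lemma map_mem_permsF {l : List V} (hl : l ∈ permsF V) (σ : Equiv.Perm V) :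
    l.map σ ∈ permsF V := by
  rw [mem_permsF]
  apply List.perm_of_nodup_nodup_toFinset_eq
  · exact (nodup_of_mem_permsF hl).map σ.injective
  · exact Finset.nodup_toList _
  · ext z
    simp only [List.mem_toFinset, List.mem_map, Finset.mem_toList, Finset.mem_univ, iff_true]
    exact ⟨σ.symm z, mem_of_mem_permsF hl _, by simp⟩

lemma card_permsF : (permsF V).card = Nat.factorial (Fintype.card V) := by
  rw [permsF, List.toFinset_card_of_nodup
    (List.nodup_permutations _ (Finset.nodup_toList _)),
    List.length_permutations, Finset.length_toList, Finset.card_univ]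

lemma qsExp_eq (f : List V → ℝ) :
    qsExp f = (∑ l ∈ permsF V, f l) / (Nat.factorial (Fintype.card V) : ℝ) := by
  rw [qsExp, permsF,
    List.sum_toFinset f (List.nodup_permutations _ (Finset.nodup_toList _))]

end Perms

lemma sigma_S_iff (u v w : V) (σ : Equiv.Perm V)
    (hfix : ∀ y, y ≠ u → y ≠ v → y ≠ w → σ y = y) :
    ∀ y : V, (σ y = u ∨ σ y = v ∨ σ y = w) ↔ (y = u ∨ y = v ∨ y = w) := by
  intro y
  constructor
  · intro hy
    by_contra hy'
    push_neg at hy'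
    rw [hfix y hy'.1 hy'.2.1 hy'.2.2] at hy
    rcases hy with e | e | e
    · exact hy'.1 e
    · exact hy'.2.1 e
    · exact hy'.2.2 e
  · intro hy
    by_contra hσ
    push_neg at hσ
    have h1 := hfix (σ y) hσ.1 hσ.2.1 hσ.2.2
    have h2 : σ y = y := σ.injective h1
    rw [h2] at hσ
    rcases hy with e | e | e
    · exact hσ.1 e
    · exact hσ.2.1 e
    · exact hσ.2.2 e

section Sym
variable [Fintype V]

lemma sum_ind_fp (h : V → V → Bool) (u v w : V) (huv : u ≠ v) (huw : u ≠ w) (hvw : v ≠ w)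
    (σ : Equiv.Perm V) (hfix : ∀ y, y ≠ u → y ≠ v → y ≠ w → σ y = y) (x : V) :
    ∑ l ∈ permsF V, (if (({u, v, w} : Finset V) ∈ pivotTriples h l ∧
        l.find? (fun y => decide (y = u ∨ y = v ∨ y = w)) = some x) then (1 : ℝ) else 0)
    = ∑ l ∈ permsF V, (if (({u, v, w} : Finset V) ∈ pivotTriples h l ∧
        l.find? (fun y => decide (y = u ∨ y = v ∨ y = w)) = some (σ x)) then (1 : ℝ) else 0) := by
  have hS := sigma_S_iff u v w σ hfix
  have hpred : (fun y => decide (y = u ∨ y = v ∨ y = w)) ∘ σ =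
      (fun y => decide (y = u ∨ y = v ∨ y = w)) := by
    funext y
    simp only [Function.comp]
    exact decide_eq_decide.mpr (hS y)
  refine Finset.sum_nbij' (fun l => l.map σ) (fun l => l.map σ.symm)
    (fun l hl => map_mem_permsF hl σ) (fun l hl => map_mem_permsF hl σ.symm)
    (fun l _ => by simp [List.map_map]) (fun l _ => by simp [List.map_map]) ?_
  intro l hl
  have hA : (({u, v, w} : Finset V) ∈ pivotTriples h l ↔
      ({u, v, w} : Finset V) ∈ pivotTriples h (l.map σ)) :=
    pT_map_iff h u v w huv huw hvw σ hfix l.length l le_rfl (nodup_of_mem_permsF hl)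
  have hfp : (l.map σ).find? (fun y => decide (y = u ∨ y = v ∨ y = w)) =
      Option.map σ (l.find? (fun y => decide (y = u ∨ y = v ∨ y = w))) := by
    rw [List.find?_map, hpred]
  have hfp2 : (l.find? (fun y => decide (y = u ∨ y = v ∨ y = w)) = some x) ↔
      ((l.map σ).find? (fun y => decide (y = u ∨ y = v ∨ y = w)) = some (σ x)) := by
    rw [hfp]
    cases l.find? (fun y => decide (y = u ∨ y = v ∨ y = w)) with
    | none => simp
    | some a => simp [σ.injective.eq_iff]
  by_cases hc : ({u, v, w} : Finset V) ∈ pivotTriples h l ∧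
      l.find? (fun y => decide (y = u ∨ y = v ∨ y = w)) = some x
  · rw [if_pos hc, if_pos ⟨hA.1 hc.1, hfp2.1 hc.2⟩]
  · rw [if_neg hc, if_neg (fun hc2 => hc ⟨hA.2 hc2.1, hfp2.2 hc2.2⟩)]

lemma sum_A_eq_three (h : V → V → Bool) (u v w : V) (huv : u ≠ v) (huw : u ≠ w)
    (hvw : v ≠ w) :
    ∑ l ∈ permsF V, (if ({u, v, w} : Finset V) ∈ pivotTriples h l then (1 : ℝ) else 0)
    = 3 * ∑ l ∈ permsF V, (if (({u, v, w} : Finset V) ∈ pivotTriples h l ∧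
        l.find? (fun y => decide (y = u ∨ y = v ∨ y = w)) = some w) then (1 : ℝ) else 0) := by
  have hpoint : ∀ l ∈ permsF V,
      (if ({u, v, w} : Finset V) ∈ pivotTriples h l then (1 : ℝ) else 0) =
      (if (({u, v, w} : Finset V) ∈ pivotTriples h l ∧
          l.find? (fun y => decide (y = u ∨ y = v ∨ y = w)) = some u) then (1 : ℝ) else 0) +
      (if (({u, v, w} : Finset V) ∈ pivotTriples h l ∧
          l.find? (fun y => decide (y = u ∨ y = v ∨ y = w)) = some v) then (1 : ℝ) else 0) +
      (if (({u, v, w} : Finset V) ∈ pivotTriples h l ∧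
          l.find? (fun y => decide (y = u ∨ y = v ∨ y = w)) = some w) then (1 : ℝ) else 0) := by
    intro l hl
    by_cases hA : ({u, v, w} : Finset V) ∈ pivotTriples h l
    · have hfs : (l.find? (fun y => decide (y = u ∨ y = v ∨ y = w))).isSome := by
        rw [List.find?_isSome]
        exact ⟨u, mem_of_mem_permsF hl u, by simp⟩
      obtain ⟨y, hy⟩ := Option.isSome_iff_exists.1 hfs
      have hyS : y = u ∨ y = v ∨ y = w := by
        have := List.find?_some hy
        simpa using this
      have hval : ∀ z : V, y ≠ z →
          (if (({u, v, w} : Finset V) ∈ pivotTriples h l ∧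
            l.find? (fun y => decide (y = u ∨ y = v ∨ y = w)) = some z) then (1 : ℝ) else 0) = 0 := by
        intro z hz
        rw [if_neg]
        rintro ⟨_, hcz⟩
        rw [hy] at hcz
        exact hz (Option.some.inj hcz)
      have hval2 : ∀ z : V, y = z →
          (if (({u, v, w} : Finset V) ∈ pivotTriples h l ∧
            l.find? (fun y => decide (y = u ∨ y = v ∨ y = w)) = some z) then (1 : ℝ) else 0) = 1 := by
        rintro z rfl
        rw [if_pos ⟨hA, hy⟩]
      rw [if_pos hA]
      rcases hyS with rfl | rfl | rfl
      · rw [hval2 y rfl, hval v huv, hval w huw]; ring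
      · rw [hval2 y rfl, hval u (Ne.symm huv), hval w hvw]; ring
      · rw [hval2 y rfl, hval u (Ne.symm huw), hval v (Ne.symm hvw)]; ring
    · simp [hA]
  rw [Finset.sum_congr rfl hpoint, Finset.sum_add_distrib, Finset.sum_add_distrib]
  have e1 := sum_ind_fp h u v w huv huw hvw (Equiv.swap u w)
    (fun y hyu _ hyw => Equiv.swap_apply_of_ne_of_ne hyu hyw) u
  rw [Equiv.swap_apply_left] at e1
  have e2 := sum_ind_fp h u v w huv huw hvw (Equiv.swap v w)
    (fun y _ hyv hyw => Equiv.swap_apply_of_ne_of_ne hyv hyw) v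
  rw [Equiv.swap_apply_left] at e2
  rw [e1, e2]
  ring

end Sym

lemma sepR_zero (h : V → V → Bool) (htour : ∀ a b : V, a ≠ b → h a b = !h b a)
    (u v w : V) (huw : u ≠ w) (hvw : v ≠ w) (he : h u w = h v w) :
    hr h u w * hr h w v + hr h v w * hr h w u = 0 := by
  unfold hr
  rw [htour w v (fun e => hvw e.symm), htour w u (fun e => huw e.symm), ← he]
  cases h u w <;> simp

lemma sepR_one (h : V → V → Bool) (htour : ∀ a b : V, a ≠ b → h a b = !h b a)
    (u v w : V) (huw : u ≠ w) (hvw : v ≠ w) (he : h u w ≠ h v w) :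
    hr h u w * hr h w v + hr h v w * hr h w u = 1 := by
  unfold hr
  rw [htour w v (fun e => hvw e.symm), htour w u (fun e => huw e.symm)]
  cases hb : h u w <;> cases hc : h v w <;> simp_all

section Key
variable [Fintype V]

lemma pointwise_P (h : V → V → Bool) (u v : V) (huv : u ≠ v)
    (l : List V) (hl : l ∈ permsF V)
    (htour : ∀ a b : V, a ≠ b → h a b = !h b a) :
    (if ({u, v} : Finset V) ∈ directPairs h l then (1 : ℝ) else 0)
      + ∑ w ∈ Finset.univ.filter (fun w : V => w ≠ u ∧ w ≠ v),
          (hr h u w * hr h w v + hr h v w * hr h w u) *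
            (if (({u, v, w} : Finset V) ∈ pivotTriples h l ∧
              l.find? (fun y => decide (y = u ∨ y = v ∨ y = w)) = some w) then (1 : ℝ) else 0)
      = 1 := by
  have hnd : l.Nodup := nodup_of_mem_permsF hl
  have hu : u ∈ l := mem_of_mem_permsF hl u
  have hv : v ∈ l := mem_of_mem_permsF hl v
  rcases ho : decideUV h u v l with _ | o
  · exact absurd ho (decideUV_ne_none h u v huv l.length l le_rfl hnd hu hv)
  rcases o with _ | c
  · -- direct comparison
    have hdir : ({u, v} : Finset V) ∈ directPairs h l :=
      (decideUV_direct h u v huv l.length l le_rfl hnd hu hv).1 ho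
    rw [if_pos hdir]
    have hz : ∑ w ∈ Finset.univ.filter (fun w : V => w ≠ u ∧ w ≠ v),
        (hr h u w * hr h w v + hr h v w * hr h w u) *
          (if (({u, v, w} : Finset V) ∈ pivotTriples h l ∧
            l.find? (fun y => decide (y = u ∨ y = v ∨ y = w)) = some w) then (1 : ℝ) else 0)
        = 0 := by
      apply Finset.sum_eq_zero
      intro w hw
      rw [Finset.mem_filter] at hw
      obtain ⟨_, hwu, hwv⟩ := hw
      by_cases he : h u w = h v w
      · rw [sepR_zero h htour u v w (Ne.symm hwu) (Ne.symm hwv) he, zero_mul]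
      · rw [if_neg, mul_zero]
        intro hc
        have := (decideUV_sep h u v w huv (Ne.symm hwu) (Ne.symm hwv) he
          l.length l le_rfl hnd hu hv).2 hc
        rw [ho] at this
        simp at this
    rw [hz]; ring
  · -- separated by pivot c
    obtain ⟨hcl, hcu, hcv, hce⟩ := decideUV_some h u v l.length l le_rfl c ho
    have hdir : ({u, v} : Finset V) ∉ directPairs h l := by
      intro hd
      have := (decideUV_direct h u v huv l.length l le_rfl hnd hu hv).2 hd
      rw [ho] at this
      simp at this
    rw [if_neg hdir]
    have hsum : ∑ w ∈ Finset.univ.filter (fun w : V => w ≠ u ∧ w ≠ v),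
        (hr h u w * hr h w v + hr h v w * hr h w u) *
          (if (({u, v, w} : Finset V) ∈ pivotTriples h l ∧
            l.find? (fun y => decide (y = u ∨ y = v ∨ y = w)) = some w) then (1 : ℝ) else 0)
        = 1 := by
      rw [Finset.sum_eq_single_of_mem c (Finset.mem_filter.2 ⟨Finset.mem_univ c, hcu, hcv⟩)]
      · rw [sepR_one h htour u v c (Ne.symm hcu) (Ne.symm hcv) hce, if_pos, mul_one]
        exact (decideUV_sep h u v c huv (Ne.symm hcu) (Ne.symm hcv) hce
          l.length l le_rfl hnd hu hv).1 ho
      · intro w hw hwc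
        rw [Finset.mem_filter] at hw
        obtain ⟨_, hwu, hwv⟩ := hw
        by_cases he : h u w = h v w
        · rw [sepR_zero h htour u v w (Ne.symm hwu) (Ne.symm hwv) he, zero_mul]
        · rw [if_neg, mul_zero]
          intro hc2
          have := (decideUV_sep h u v w huv (Ne.symm hwu) (Ne.symm hwv) he
            l.length l le_rfl hnd hu hv).2 hc2
          rw [ho] at this
          exact hwc (Option.some.inj (Option.some.inj this)).symm
    rw [hsum]; ring

lemma key_eq (h : V → V → Bool) (htour : ∀ a b : V, a ≠ b → h a b = !h b a)
    (u v : V) (huv : u ≠ v) :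
    pPair h u v + ∑ w ∈ Finset.univ.filter (fun w : V => w ≠ u ∧ w ≠ v),
      (1 / 3 : ℝ) * ((hr h u w * hr h w v + hr h v w * hr h w u) * pTriple h u v w) = 1 := by
  set N : ℝ := (Nat.factorial (Fintype.card V) : ℝ) with hN
  have hNne : N ≠ 0 := Nat.cast_ne_zero.2 (Nat.factorial_ne_zero _)
  have hPP : pPair h u v =
      (∑ l ∈ permsF V, (if ({u, v} : Finset V) ∈ directPairs h l then (1 : ℝ) else 0)) / N :=
    qsExp_eq _
  have hPT : ∀ w ∈ Finset.univ.filter (fun w : V => w ≠ u ∧ w ≠ v),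
      pTriple h u v w = (3 * ∑ l ∈ permsF V, (if (({u, v, w} : Finset V) ∈ pivotTriples h l ∧
        l.find? (fun y => decide (y = u ∨ y = v ∨ y = w)) = some w) then (1 : ℝ) else 0)) / N := by
    intro w hw
    rw [Finset.mem_filter] at hw
    rw [pTriple, qsExp_eq, sum_A_eq_three h u v w huv (Ne.symm hw.2.1) (Ne.symm hw.2.2)]
  calc pPair h u v + ∑ w ∈ Finset.univ.filter (fun w : V => w ≠ u ∧ w ≠ v),
        (1 / 3 : ℝ) * ((hr h u w * hr h w v + hr h v w * hr h w u) * pTriple h u v w)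
      = (∑ l ∈ permsF V, (if ({u, v} : Finset V) ∈ directPairs h l then (1 : ℝ) else 0)) / N
        + ∑ w ∈ Finset.univ.filter (fun w : V => w ≠ u ∧ w ≠ v),
            (∑ l ∈ permsF V, (hr h u w * hr h w v + hr h v w * hr h w u) *
              (if (({u, v, w} : Finset V) ∈ pivotTriples h l ∧
                l.find? (fun y => decide (y = u ∨ y = v ∨ y = w)) = some w)
                then (1 : ℝ) else 0)) / N := by
        rw [hPP]
        congr 1
        apply Finset.sum_congr rfl
        intro w hw
        rw [hPT w hw, ← Finset.mul_sum]
        field_simp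
    _ = (∑ l ∈ permsF V, ((if ({u, v} : Finset V) ∈ directPairs h l then (1 : ℝ) else 0)
          + ∑ w ∈ Finset.univ.filter (fun w : V => w ≠ u ∧ w ≠ v),
              (hr h u w * hr h w v + hr h v w * hr h w u) *
                (if (({u, v, w} : Finset V) ∈ pivotTriples h l ∧
                  l.find? (fun y => decide (y = u ∨ y = v ∨ y = w)) = some w)
                  then (1 : ℝ) else 0))) / N := by
        rw [← Finset.sum_div, ← add_div, Finset.sum_comm, ← Finset.sum_add_distrib]
    _ = (∑ l ∈ permsF V, (1 : ℝ)) / N := by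
        congr 1
        apply Finset.sum_congr rfl
        intro l hl
        exact pointwise_P h u v huv l hl htour
    _ = 1 := by
        rw [Finset.sum_const, card_permsF, nsmul_eq_mul, mul_one, hN, div_self hNne]

end Key

lemma pTriple_congr [Fintype V] (h : V → V → Bool) {a b c d e f : V}
    (hset : ({a, b, c} : Finset V) = {d, e, f}) : pTriple h a b c = pTriple h d e f := by
  unfold pTriple
  rw [hset]

lemma reindex_triples [Fintype V] [LinearOrder V] (F : V → V → V → ℝ) :
    ∑ p ∈ Finset.univ.filter (fun p : V × V => p.1 < p.2),
      ∑ w ∈ Finset.univ.filter (fun w : V => w ≠ p.1 ∧ w ≠ p.2), F p.1 p.2 w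
    = ∑ t ∈ Finset.univ.filter (fun t : V × V × V => t.1 < t.2.1 ∧ t.2.1 < t.2.2),
        (F t.2.1 t.2.2 t.1 + F t.1 t.2.2 t.2.1 + F t.1 t.2.1 t.2.2) := by
  have hsplit : ∀ (a b c : V) (r : ℝ),
      (if (a < b ∧ c ≠ a ∧ c ≠ b) then r else 0) =
        (if (a < b ∧ c < a) then r else 0) + (if (a < b ∧ a < c ∧ c < b) then r else 0)
          + (if (a < b ∧ b < c) then r else 0) := by
    intro a b c r
    by_cases hab : a < b
    · rcases lt_trichotomy c a with hca | hca | hca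
      · rw [if_pos ⟨hab, ne_of_lt hca, ne_of_lt (hca.trans hab)⟩, if_pos ⟨hab, hca⟩,
          if_neg (fun hc => lt_asymm hca hc.2.1),
          if_neg (fun hc => lt_irrefl c ((hca.trans hab).trans hc.2))]
        ring
      · subst hca
        rw [if_neg (fun hc => hc.2.1 rfl), if_neg (fun hc => lt_irrefl c hc.2),
          if_neg (fun hc => lt_irrefl c hc.2.1), if_neg (fun hc => lt_asymm hc.1 hc.2)]
        ring
      · rcases lt_trichotomy c b with hcb | hcb | hcb
        · rw [if_pos ⟨hab, ne_of_gt hca, ne_of_lt hcb⟩, if_neg (fun hc => lt_asymm hca hc.2),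
            if_pos ⟨hab, hca, hcb⟩, if_neg (fun hc => lt_asymm hcb hc.2)]
          ring
        · subst hcb
          rw [if_neg (fun hc => hc.2.2 rfl), if_neg (fun hc => lt_asymm hc.1 hc.2),
            if_neg (fun hc => lt_irrefl c hc.2.2), if_neg (fun hc => lt_irrefl c hc.2)]
          ring
        · rw [if_pos ⟨hab, ne_of_gt hca, ne_of_gt hcb⟩, if_neg (fun hc => lt_asymm hca hc.2),
            if_neg (fun hc => lt_asymm hcb hc.2.2), if_pos ⟨hab, hcb⟩]
          ring
    · rw [if_neg (fun hc => hab hc.1), if_neg (fun hc => hab hc.1),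
        if_neg (fun hc => hab hc.1), if_neg (fun hc => hab hc.1)]
      ring
  calc ∑ p ∈ Finset.univ.filter (fun p : V × V => p.1 < p.2),
        ∑ w ∈ Finset.univ.filter (fun w : V => w ≠ p.1 ∧ w ≠ p.2), F p.1 p.2 w
      = ∑ p : V × V, ∑ w : V,
          (if (p.1 < p.2 ∧ w ≠ p.1 ∧ w ≠ p.2) then F p.1 p.2 w else 0) := by
        rw [Finset.sum_filter]
        apply Finset.sum_congr rfl
        intro p _
        by_cases hp : p.1 < p.2
        · rw [if_pos hp, Finset.sum_filter]
          apply Finset.sum_congr rfl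
          intro w _
          by_cases hw : w ≠ p.1 ∧ w ≠ p.2
          · rw [if_pos hw, if_pos ⟨hp, hw⟩]
          · rw [if_neg hw, if_neg (fun hc => hw hc.2)]
        · rw [if_neg hp]
          symm
          apply Finset.sum_eq_zero
          intro w _
          exact if_neg (fun hc => hp hc.1)
    _ = ∑ t : V × V × V,
          (if (t.1 < t.2.1 ∧ t.2.2 ≠ t.1 ∧ t.2.2 ≠ t.2.1) then F t.1 t.2.1 t.2.2 else 0) := by
        rw [Fintype.sum_prod_type, Fintype.sum_prod_type]
        apply Finset.sum_congr rfl
        intro a _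
        rw [Fintype.sum_prod_type]
    _ = (∑ t : V × V × V, (if (t.1 < t.2.1 ∧ t.2.2 < t.1) then F t.1 t.2.1 t.2.2 else 0))
        + (∑ t : V × V × V,
            (if (t.1 < t.2.1 ∧ t.1 < t.2.2 ∧ t.2.2 < t.2.1) then F t.1 t.2.1 t.2.2 else 0))
        + (∑ t : V × V × V,
            (if (t.1 < t.2.1 ∧ t.2.1 < t.2.2) then F t.1 t.2.1 t.2.2 else 0)) := by
        rw [← Finset.sum_add_distrib, ← Finset.sum_add_distrib]
        apply Finset.sum_congr rfl
        intro t _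
        exact hsplit t.1 t.2.1 t.2.2 _
    _ = (∑ t : V × V × V, (if (t.1 < t.2.1 ∧ t.2.1 < t.2.2) then F t.2.1 t.2.2 t.1 else 0))
        + (∑ t : V × V × V,
            (if (t.1 < t.2.1 ∧ t.2.1 < t.2.2) then F t.1 t.2.2 t.2.1 else 0))
        + (∑ t : V × V × V,
            (if (t.1 < t.2.1 ∧ t.2.1 < t.2.2) then F t.1 t.2.1 t.2.2 else 0)) := by
        congr 1
        congr 1
        · apply Fintype.sum_equiv
            ⟨fun t : V × V × V => (t.2.2, t.1, t.2.1),
             fun t : V × V × V => (t.2.1, t.2.2, t.1), fun t => rfl, fun t => rfl⟩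
          intro x
          simp only [Equiv.coe_fn_mk]
          refine if_congr ?_ rfl rfl
          constructor
          · intro h0; exact ⟨h0.2, h0.1⟩
          · intro h0; exact ⟨h0.2, h0.1⟩
        · apply Fintype.sum_equiv
            ⟨fun t : V × V × V => (t.1, t.2.2, t.2.1),
             fun t : V × V × V => (t.1, t.2.2, t.2.1), fun t => rfl, fun t => rfl⟩
          intro x
          simp only [Equiv.coe_fn_mk]
          refine if_congr ?_ rfl rfl
          constructor
          · intro h0; exact ⟨h0.2.1, h0.2.2⟩
          · intro h0; exact ⟨h0.1.trans h0.2, h0.1, h0.2⟩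
    _ = ∑ t : V × V × V, (if (t.1 < t.2.1 ∧ t.2.1 < t.2.2) then
          (F t.2.1 t.2.2 t.1 + F t.1 t.2.2 t.2.1 + F t.1 t.2.1 t.2.2) else 0) := by
        rw [← Finset.sum_add_distrib, ← Finset.sum_add_distrib]
        apply Finset.sum_congr rfl
        intro t _
        by_cases hP : t.1 < t.2.1 ∧ t.2.1 < t.2.2
        · simp [hP]
        · simp [hP]
    _ = ∑ t ∈ Finset.univ.filter (fun t : V × V × V => t.1 < t.2.1 ∧ t.2.1 < t.2.2),
          (F t.2.1 t.2.2 t.1 + F t.1 t.2.2 t.2.1 + F t.1 t.2.1 t.2.2) := by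
        rw [Finset.sum_filter]


/-- QuickSort decomposition, first part: a sum of a pair
function decomposes according to direct and indirect (pivot) charging. -/
theorem quicksort_decomposition_pairs [Fintype V] [LinearOrder V]
    (h : V → V → Bool) (htour : ∀ a b : V, a ≠ b → h a b = !h b a)
    (Z : Finset V → ℝ) :
    ∑ p ∈ Finset.univ.filter (fun p : V × V => p.1 < p.2), Z {p.1, p.2}
      = (∑ p ∈ Finset.univ.filter (fun p : V × V => p.1 < p.2),
          pPair h p.1 p.2 * Z {p.1, p.2})
        + ∑ t ∈ Finset.univ.filter
            (fun t : V × V × V => t.1 < t.2.1 ∧ t.2.1 < t.2.2),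
          pTriple h t.1 t.2.1 t.2.2 *
            ((1 / 3 : ℝ) *
              ((hr h t.1 t.2.1 * hr h t.2.1 t.2.2 + hr h t.2.2 t.2.1 * hr h t.2.1 t.1) *
                  Z {t.1, t.2.2}
                + (hr h t.2.1 t.1 * hr h t.1 t.2.2 + hr h t.2.2 t.1 * hr h t.1 t.2.1) *
                  Z {t.2.1, t.2.2}
                + (hr h t.1 t.2.2 * hr h t.2.2 t.2.1 + hr h t.2.1 t.2.2 * hr h t.2.2 t.1) *
                  Z {t.1, t.2.1})) := by

  have hkey : ∀ p ∈ Finset.univ.filter (fun p : V × V => p.1 < p.2),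
      Z {p.1, p.2} = pPair h p.1 p.2 * Z {p.1, p.2}
        + ∑ w ∈ Finset.univ.filter (fun w : V => w ≠ p.1 ∧ w ≠ p.2),
            ((1 / 3 : ℝ) * ((hr h p.1 w * hr h w p.2 + hr h p.2 w * hr h w p.1) *
              pTriple h p.1 p.2 w)) * Z {p.1, p.2} := by
    intro p hp
    rw [Finset.mem_filter] at hp
    have hk := key_eq h htour p.1 p.2 (ne_of_lt hp.2)
    calc Z {p.1, p.2}
        = (pPair h p.1 p.2 + ∑ w ∈ Finset.univ.filter (fun w : V => w ≠ p.1 ∧ w ≠ p.2),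
            (1 / 3 : ℝ) * ((hr h p.1 w * hr h w p.2 + hr h p.2 w * hr h w p.1) *
              pTriple h p.1 p.2 w)) * Z {p.1, p.2} := by rw [hk, one_mul]
      _ = _ := by rw [add_mul, Finset.sum_mul]
  rw [Finset.sum_congr rfl hkey, Finset.sum_add_distrib]
  congr 1
  rw [reindex_triples (fun a b c => ((1 / 3 : ℝ) *
    ((hr h a c * hr h c b + hr h b c * hr h c a) * pTriple h a b c)) * Z {a, b})]
  apply Finset.sum_congr rfl
  intro t _
  beta_reduce
  have e1 : pTriple h t.2.1 t.2.2 t.1 = pTriple h t.1 t.2.1 t.2.2 :=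
    pTriple_congr h (by ext z; simp; tauto)
  have e2 : pTriple h t.1 t.2.2 t.2.1 = pTriple h t.1 t.2.1 t.2.2 :=
    pTriple_congr h (by ext z; simp; tauto)
  rw [e1, e2]
  ring
end
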